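/- In the cube sampling scheme, for each fixed i ∈ {1,…,n}, the process v_t^i = E[∂_i f(B) | b_1=w_1,…,b_t=w_t] / E[f(B) | b_1=w_1,…,b_t=w_t], t = 0,1,…,n, is a martingale with respect to the filtration generated by (w_1, …, w_t), where W = (w_1,…,w_n) is sampled with law f dμ as in the sequential scheme. -/

import Mathlib

open Finset

/-- `cubeDriftI n f i t w = v_t^i`: the ratio
`E[∂_i f(B) | b₁ = w₁,…,b_t = w_t] / E[f(B) | b₁ = w₁,…,b_t = w_t]`. -/
noncomputable def cubeDriftI (n : ℕ) (f : (Fin n → Bool) → ℝ) (i : Fin n) (t : ℕ)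
    (w : Fin n → Bool) : ℝ :=
  (∑ x : Fin n → Bool, if ∀ j : Fin n, (j : ℕ) < t → x j = w j then
      (f (Function.update x i true) - f (Function.update x i false)) / 2 else 0) /
    (∑ x : Fin n → Bool, if ∀ j : Fin n, (j : ℕ) < t → x j = w j then f x else 0)

section Aux

variable {n : ℕ}

lemma sum_update_eq (t : Fin n) (b : Bool) (g : (Fin n → Bool) → ℝ) :
    ∑ x : Fin n → Bool, g (Function.update x t b)
      = 2 * ∑ x : Fin n → Bool, if x t = b then g x else 0 := by
  have hinv : Function.Involutive (fun x : Fin n → Bool => Function.update x t (!x t)) := by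
    intro x; funext j
    rcases eq_or_ne j t with h | h <;> simp [h, Function.update_apply]
  have key : ∀ x : Fin n → Bool,
      g (Function.update x t b)
        = (if x t = b then g x else 0)
          + (if x t = b then 0 else g (Function.update x t b)) := by
    intro x
    by_cases h : x t = b
    · rw [if_pos h, if_pos h, ← h, Function.update_eq_self, add_zero]
    · rw [if_neg h, if_neg h, zero_add]
  rw [show (∑ x : Fin n → Bool, g (Function.update x t b))
      = ∑ x : Fin n → Bool, ((if x t = b then g x else 0)
          + (if x t = b then 0 else g (Function.update x t b)))
      from Finset.sum_congr rfl fun x _ => key x,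
    Finset.sum_add_distrib]
  have h2 : (∑ x : Fin n → Bool, if x t = b then 0 else g (Function.update x t b))
      = ∑ x : Fin n → Bool, if x t = b then g x else 0 := by
    rw [← Equiv.sum_comp hinv.toPerm
      (fun x : Fin n → Bool => if x t = b then (0:ℝ) else g (Function.update x t b))]
    refine Finset.sum_congr rfl fun x _ => ?_
    simp only [Function.Involutive.coe_toPerm]
    by_cases h : x t = b
    · have h1 : (Function.update x t (!x t)) t = !b := by simp [h]
      have hx : Function.update x t b = x := by rw [← h, Function.update_eq_self]
      simp [h, h1, hx, Function.update_idem]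
    · have hb : x t = !b := by revert h; cases x t <;> cases b <;> simp
      have h1 : (Function.update x t (!x t)) t = b := by simp [hb]
      simp [h1, h, hb]
  rw [h2]; ring

end Aux

/-- In the cube sampling scheme, each process `t ↦ v_t^i` is a martingale: conditionally on
`w₁,…,w_t`, the bit `w_{t+1}` equals `+1` with probability `(1 + v_t)/2` (where
`v_t = v_t^{t+1}`), and averaging `v_{t+1}^i` over `w_{t+1}` with these weights
recovers `v_t^i`. -/
theorem cube_drift_martingale (n : ℕ) (f : (Fin n → Bool) → ℝ)
    (hpos : ∀ x, 0 < f x)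
    (hmean : (∑ x : Fin n → Bool, f x) / 2 ^ n = 1)
    (i : Fin n) (t : Fin n) (w : Fin n → Bool) :
    cubeDriftI n f i (t : ℕ) w =
      (1 + cubeDriftI n f t (t : ℕ) w) / 2 *
          cubeDriftI n f i ((t : ℕ) + 1) (Function.update w t true) +
        (1 - cubeDriftI n f t (t : ℕ) w) / 2 *
          cubeDriftI n f i ((t : ℕ) + 1) (Function.update w t false) := by
  classical
  -- condition equivalence
  have cond_succ : ∀ (b : Bool) (x : Fin n → Bool),
      (∀ j : Fin n, (j : ℕ) < (t : ℕ) + 1 → x j = Function.update w t b j)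
        ↔ ((∀ j : Fin n, (j : ℕ) < (t : ℕ) → x j = w j) ∧ x t = b) := by
    intro b x
    constructor
    · intro h
      refine ⟨fun j hj => ?_, ?_⟩
      · have hjt : j ≠ t := Fin.ne_of_val_ne (by omega)
        have := h j (by omega)
        rwa [Function.update_of_ne hjt] at this
      · have := h t (by omega)
        rwa [Function.update_self] at this
    · rintro ⟨h1, h2⟩ j hj
      rcases eq_or_ne j t with rfl | hjt
      · rw [Function.update_self]; exact h2
      · rw [Function.update_of_ne hjt]
        have : (j : ℕ) ≠ (t : ℕ) := fun e => hjt (Fin.ext e)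
        exact h1 j (by omega)
  set Q : (Fin n → Bool) → Prop := fun x => ∀ j : Fin n, (j : ℕ) < (t : ℕ) → x j = w j with hQdef
  -- the four building blocks
  set Sp : ℝ := ∑ x : Fin n → Bool, if Q x ∧ x t = true then f x else 0 with hSp
  set Sm : ℝ := ∑ x : Fin n → Bool, if Q x ∧ x t = false then f x else 0 with hSm
  set Dp : ℝ := ∑ x : Fin n → Bool, if Q x ∧ x t = true then
      (f (Function.update x i true) - f (Function.update x i false)) / 2 else 0 with hDp
  set Dm : ℝ := ∑ x : Fin n → Bool, if Q x ∧ x t = false then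
      (f (Function.update x i true) - f (Function.update x i false)) / 2 else 0 with hDm
  -- positivity
  have hQself : ∀ b : Bool, Q (Function.update w t b) ∧ (Function.update w t b) t = b := by
    intro b
    refine ⟨fun j hj => ?_, Function.update_self _ _ _⟩
    exact Function.update_of_ne (Fin.ne_of_val_ne (by omega)) _ _
  have hSb : ∀ b : Bool, 0 < ∑ x : Fin n → Bool, if Q x ∧ x t = b then f x else 0 := by
    intro b
    refine Finset.sum_pos' (fun x _ => by split_ifs with h; exacts [(hpos x).le, le_rfl]) ?_
    refine ⟨Function.update w t b, Finset.mem_univ _, ?_⟩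
    rw [if_pos (hQself b)]
    exact hpos _
  have hSpn : (0:ℝ) < Sp := hSb true
  have hSmn : (0:ℝ) < Sm := hSb false
  -- identify the successor-time numerators/denominators
  have hden : ∀ b : Bool,
      (∑ x : Fin n → Bool, if ∀ j : Fin n, (j : ℕ) < (t : ℕ) + 1 →
          x j = Function.update w t b j then f x else 0)
        = ∑ x : Fin n → Bool, if Q x ∧ x t = b then f x else 0 :=
    fun b => Finset.sum_congr rfl fun x _ => if_congr (cond_succ b x) rfl rfl
  have hnum : ∀ b : Bool,
      (∑ x : Fin n → Bool, if ∀ j : Fin n, (j : ℕ) < (t : ℕ) + 1 →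
          x j = Function.update w t b j then
          (f (Function.update x i true) - f (Function.update x i false)) / 2 else 0)
        = ∑ x : Fin n → Bool, if Q x ∧ x t = b then
            (f (Function.update x i true) - f (Function.update x i false)) / 2 else 0 :=
    fun b => Finset.sum_congr rfl fun x _ => if_congr (cond_succ b x) rfl rfl
  -- time-t denominator and numerator split
  have hSsplit : (∑ x : Fin n → Bool, if Q x then f x else 0) = Sp + Sm := by
    rw [hSp, hSm, ← Finset.sum_add_distrib]
    refine Finset.sum_congr rfl fun x _ => ?_
    by_cases hq : Q x
    · cases hxt : x t <;> simp [hq, hxt]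
    · simp [hq]
  have hDsplit : (∑ x : Fin n → Bool, if Q x then
      (f (Function.update x i true) - f (Function.update x i false)) / 2 else 0) = Dp + Dm := by
    rw [hDp, hDm, ← Finset.sum_add_distrib]
    refine Finset.sum_congr rfl fun x _ => ?_
    by_cases hq : Q x
    · cases hxt : x t <;> simp [hq, hxt]
    · simp [hq]
  -- time-t drift numerator (i := t) equals Sp - Sm
  have hQupd : ∀ (x : Fin n → Bool) (b : Bool), Q (Function.update x t b) ↔ Q x := by
    intro x b
    constructor <;> intro h j hj <;>
      [ (have := h j hj;
         rwa [Function.update_of_ne (Fin.ne_of_val_ne (by omega : (j:ℕ) ≠ (t:ℕ)))] at this);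
        (rw [Function.update_of_ne (Fin.ne_of_val_ne (by omega : (j:ℕ) ≠ (t:ℕ)))]; exact h j hj)]
  have hupd : ∀ b : Bool,
      (∑ x : Fin n → Bool, if Q x then f (Function.update x t b) else 0)
        = 2 * ∑ x : Fin n → Bool, if Q x ∧ x t = b then f x else 0 := by
    intro b
    have := sum_update_eq t b (fun y => if Q y then f y else 0)
    rw [show (∑ x : Fin n → Bool, if Q x then f (Function.update x t b) else 0)
        = ∑ x : Fin n → Bool, (fun y => if Q y then f y else 0) (Function.update x t b)
        from Finset.sum_congr rfl fun x _ => by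
          simp only []
          by_cases hq : Q x
          · rw [if_pos hq, if_pos ((hQupd x b).mpr hq)]
          · rw [if_neg hq, if_neg (fun h => hq ((hQupd x b).mp h))],
      this]
    congr 1
    refine Finset.sum_congr rfl fun x _ => ?_
    by_cases hxt : x t = b
    · by_cases hq : Q x
      · rw [if_pos hxt, if_pos hq, if_pos ⟨hq, hxt⟩]
      · rw [if_pos hxt, if_neg hq, if_neg (fun h => hq h.1)]
    · rw [if_neg hxt, if_neg (fun h => hxt h.2)]
  have hNt : (∑ x : Fin n → Bool, if Q x then
      (f (Function.update x t true) - f (Function.update x t false)) / 2 else 0)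
        = Sp - Sm := by
    have : (∑ x : Fin n → Bool, if Q x then
        (f (Function.update x t true) - f (Function.update x t false)) / 2 else 0)
      = ((∑ x : Fin n → Bool, if Q x then f (Function.update x t true) else 0)
        - ∑ x : Fin n → Bool, if Q x then f (Function.update x t false) else 0) / 2 := by
      rw [← Finset.sum_sub_distrib, Finset.sum_div]
      refine Finset.sum_congr rfl fun x _ => ?_
      split_ifs with hq
      · ring
      · simp
    rw [this, hupd true, hupd false, hSp, hSm]; ring
  -- now unfold everything
  unfold cubeDriftI
  rw [hden true, hden false, hnum true, hnum false]
  rw [hSsplit, hDsplit, hNt, ← hSp, ← hSm, ← hDp, ← hDm]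
  have hs : Sp + Sm ≠ 0 := by positivity
  field_simp
  ring
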